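/- Let G be a finite simple graph with vertex set V, for adjacent i, j set A_{ij} = 1 if i < j and A_{ij} = −1 if i > j, let N_j denote the neighbor set of a vertex j and d_j = |N_j| ≥ 1 its degree, and let c > 0. Let x_i : ℕ → ℝ (for i ∈ V) and z_{i|j} : ℕ → ℝ (for each ordered adjacent pair (i, j)) satisfy, for all t and all adjacent i, j: z_{j|i}(t+1) = (1/2)·z_{j|i}(t) + (1/2)·(z_{i|j}(t) + 2c·A_{ij}·x_i(t)). Fix a vertex j and a time t ≥ 1, and suppose there exist signs σ(t), σ(t+1) ∈ {−1, 1} such that x_j(t) = (σ(t) − Σ_{k∈N_j} A_{jk}·z_{j|k}(t))/(c·d_j) and x_j(t+1) = (σ(t+1) − Σ_{k∈N_j} A_{jk}·z_{j|k}(t+1))/(c·d_j). Then x_j(t+1) − x_j(t) = (1/d_j)·Σ_{k∈N_j} ( x_k(t) − (1/2)·x_k(t−1) − (1/2)·x_j(t−1) ) + r, where r = (σ(t+1) − σ(t))/(c·d_j), and moreover r ∈ {0, 2/(c·d_j), −2/(c·d_j)}. -/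

import Mathlib

open Finset

/-- Equation (8) of the paper: if node `j`'s x-update takes one of the two boundary
values at times `t` and `t+1`, then its successive primal iterates satisfy a recursion
depending only on previously broadcast values, up to an offset `r ∈ {0, ±2/(c·d_j)}`. -/
theorem stmt_3 {V : Type*} [Fintype V] [LinearOrder V]
    (G : SimpleGraph V) [DecidableRel G.Adj]
    (A : V → V → ℝ) (hA : ∀ i j : V, A i j = if i < j then 1 else -1)
    (d : V → ℕ) (hd : ∀ j : V, d j = (G.neighborFinset j).card)
    (hd1 : ∀ j : V, 1 ≤ d j)
    (c : ℝ) (hc : 0 < c)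
    (x : V → ℕ → ℝ) (z : V → V → ℕ → ℝ)
    (hz : ∀ i j : V, G.Adj i j → ∀ t : ℕ,
      z j i (t + 1) = (1 / 2) * z j i t + (1 / 2) * (z i j t + 2 * c * A i j * x i t))
    (j : V) (t : ℕ) (ht : 1 ≤ t)
    (σ : ℕ → ℝ)
    (hσt : σ t = 1 ∨ σ t = -1) (hσt1 : σ (t + 1) = 1 ∨ σ (t + 1) = -1)
    (hxt : x j t =
      (σ t - ∑ k ∈ G.neighborFinset j, A j k * z j k t) / (c * d j))
    (hxt1 : x j (t + 1) =
      (σ (t + 1) - ∑ k ∈ G.neighborFinset j, A j k * z j k (t + 1)) / (c * d j)) :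
    x j (t + 1) - x j t =
      (1 / d j) * ∑ k ∈ G.neighborFinset j,
        (x k t - (1 / 2) * x k (t - 1) - (1 / 2) * x j (t - 1)) +
      (σ (t + 1) - σ t) / (c * d j) ∧
    ((σ (t + 1) - σ t) / (c * d j) = 0 ∨
     (σ (t + 1) - σ t) / (c * d j) = 2 / (c * d j) ∨
     (σ (t + 1) - σ t) / (c * d j) = -2 / (c * d j)) := by
  have hdpos : (0:ℝ) < (d j : ℝ) := by exact_mod_cast Nat.lt_of_lt_of_le Nat.zero_lt_one (hd1 j)
  have hD : (c * (d j : ℝ)) ≠ 0 := by positivity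
  obtain ⟨s, rfl⟩ : ∃ s, t = s + 1 := ⟨t - 1, (Nat.succ_pred_eq_of_pos ht).symm⟩
  constructor
  · have key : ∀ k ∈ G.neighborFinset j,
        A j k * z j k (s + 1 + 1) - A j k * z j k (s + 1)
          = -(c * (x k (s + 1) - (1/2) * x k s - (1/2) * x j s)) := by
      intro k hk
      rw [SimpleGraph.mem_neighborFinset] at hk
      have h1 := hz k j hk.symm (s + 1)
      have h2 := hz k j hk.symm s
      have h3 := hz j k hk s
      have hne : j ≠ k := hk.ne
      rcases hne.lt_or_gt with h | h
      · rw [hA j k, hA k j] at *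
        simp only [if_pos h, if_neg (not_lt.2 h.le)] at h1 h2 h3 ⊢
        linarith
      · rw [hA j k, hA k j] at *
        simp only [if_pos h, if_neg (not_lt.2 h.le)] at h1 h2 h3 ⊢
        linarith
    have hsum : ∑ k ∈ G.neighborFinset j, A j k * z j k (s + 1 + 1)
        - ∑ k ∈ G.neighborFinset j, A j k * z j k (s + 1)
        = -(c * ∑ k ∈ G.neighborFinset j,
            (x k (s + 1) - (1/2) * x k s - (1/2) * x j s)) := by
      rw [← Finset.sum_sub_distrib, Finset.sum_congr rfl key, Finset.sum_neg_distrib,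
        ← Finset.mul_sum]
    simp only [Nat.add_sub_cancel]
    rw [hxt1, hxt, div_sub_div_same]
    have hnum : σ (s + 1 + 1) - ∑ k ∈ G.neighborFinset j, A j k * z j k (s + 1 + 1)
        - (σ (s + 1) - ∑ k ∈ G.neighborFinset j, A j k * z j k (s + 1))
        = (σ (s + 1 + 1) - σ (s + 1)) + c * ∑ k ∈ G.neighborFinset j,
            (x k (s + 1) - (1/2) * x k s - (1/2) * x j s) := by
      linarith [hsum]
    rw [hnum]
    generalize ∑ k ∈ G.neighborFinset j, (x k (s + 1) - (1/2) * x k s - (1/2) * x j s) = S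
    field_simp
    ring
  · rcases hσt1 with h1 | h1 <;> rcases hσt with h2 | h2 <;> rw [h1, h2] <;> norm_num
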